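/- Let k be an algebraically closed field of characteristic 0, let r ≥ 2, and let G = ⟨(1/r)(a₁,…,aₙ)⟩ ⊂ SL(n,k) be the finite cyclic subgroup of order r generated by the diagonal matrix g = diag(ξ^{a₁},…,ξ^{aₙ}). If G embeds into SL(n₁,k) × SL(n₂,k) for some integers n₁, n₂ ≥ 1 with n₁ + n₂ = n, then at least one of the following holds: (a) r divides aᵢ for some i (equivalently, some generator of G has a zero exponent); or (b) r divides no aᵢ, and for every integer u with gcd(u,r) = 1 the exponents bᵢ := (u·aᵢ) mod r of the generator gᵘ satisfy 0 < bᵢ < r for all i and b₁ + ⋯ + bₙ > r. -/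

import Mathlib

open Matrix Finset

/-- A subset `G` of the matrices `Matrix (Fin n) (Fin n) k` (thought of as a subgroup of
`SL(n, k)`) *embeds into* `SL(n₁, k) × SL(n₂, k)` (where `n₁ + n₂ = n`) if there is an
invertible matrix `P` conjugating every element of `G` into a block-diagonal matrix whose
two diagonal blocks have determinant `1`. -/
def EmbedsIntoProdSL (k : Type) [Field k] {n : ℕ} (n₁ n₂ : ℕ) (hn : n₁ + n₂ = n)
    (G : Set (Matrix (Fin n) (Fin n) k)) : Prop :=
  ∃ P : Matrix (Fin n) (Fin n) k, IsUnit P ∧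
    ∀ h ∈ G, ∃ (h₁ : Matrix (Fin n₁) (Fin n₁) k) (h₂ : Matrix (Fin n₂) (Fin n₂) k),
      h₁.det = 1 ∧ h₂.det = 1 ∧
      P * h * P⁻¹ =
        Matrix.reindex (finSumFinEquiv.trans (finCongr hn)) (finSumFinEquiv.trans (finCongr hn))
          (Matrix.fromBlocks h₁ 0 0 h₂)

open Polynomial

lemma multiset_le_map' {α β : Type*} {f : α → β} [DecidableEq β] :
    ∀ {s : Multiset α} {μ : Multiset β}, μ ≤ s.map f → ∃ t ≤ s, μ = t.map f := by
  intro s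
  induction s using Multiset.induction with
  | empty =>
    intro μ h
    rw [Multiset.map_zero, Multiset.le_zero] at h
    exact ⟨0, le_refl _, by simp [h]⟩
  | cons a s ih =>
    intro μ h
    rw [Multiset.map_cons] at h
    by_cases hm : f a ∈ μ
    · have h1 : μ.erase (f a) ≤ s.map f := by
        have := Multiset.erase_le_erase (f a) h
        rwa [Multiset.erase_cons_head] at this
      obtain ⟨t, ht, he⟩ := ih h1
      exact ⟨a ::ₘ t, Multiset.cons_le_cons _ ht, by
        rw [Multiset.map_cons, ← he, Multiset.cons_erase hm]⟩
    · obtain ⟨t, ht, he⟩ := ih ((Multiset.le_cons_of_notMem hm).mp h)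
      exact ⟨t, ht.trans (Multiset.le_cons_self _ _), he⟩

lemma charpoly_conj' {k : Type} [Field k] {n : ℕ} (P M : Matrix (Fin n) (Fin n) k)
    (hP : IsUnit P) : (P * M * P⁻¹).charpoly = M.charpoly := by
  have hPd : IsUnit P.det := (Matrix.isUnit_iff_isUnit_det P).mp hP
  have hPP : P * P⁻¹ = 1 := Matrix.mul_nonsing_inv P hPd
  have key : charmatrix (P * M * P⁻¹) =
      (P.map C) * charmatrix M * (P⁻¹.map C) := by
    simp only [charmatrix, RingHom.mapMatrix_apply]
    rw [mul_sub, sub_mul]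
    congr 1
    · rw [(Matrix.scalar_commute X (Commute.all X) (P.map C)).symm.eq, mul_assoc,
        ← Matrix.map_mul, hPP]
      simp
    · rw [← Matrix.map_mul, ← Matrix.map_mul]
  have hone : (P.map C).det * ((P⁻¹).map C).det = 1 := by
    rw [← Matrix.det_mul, ← Matrix.map_mul, hPP]
    simp
  rw [Matrix.charpoly, Matrix.charpoly, key, Matrix.det_mul, Matrix.det_mul]
  linear_combination M.charmatrix.det * hone

lemma charpoly_diag' {k : Type} [Field k] {n : ℕ} (d : Fin n → k) :
    (Matrix.diagonal d).charpoly = ∏ i, (X - C (d i)) := by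
  have : charmatrix (Matrix.diagonal d) = Matrix.diagonal (fun i => X - C (d i)) := by
    ext i j
    by_cases h : i = j
    · subst h; simp [charmatrix_apply_eq]
    · simp [charmatrix_apply_ne _ _ _ h, Matrix.diagonal_apply_ne _ h]
  rw [Matrix.charpoly, this, Matrix.det_diagonal]

lemma pow_multiset_sum' {M : Type*} [CommMonoid M] (x : M) (s : Multiset ℕ) :
    (s.map (x ^ ·)).prod = x ^ s.sum := by
  induction s using Multiset.induction with
  | empty => simp
  | cons a s ih => simp [pow_add, ih]

/-- If the cyclic group `G = ⟨(1/r)(a₁, …, aₙ)⟩ < SL(n, k)` embeds into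
`SL(n₁, k) × SL(n₂, k)`, then either some generator of `G` has a zero exponent
(i.e. `r ∣ aᵢ` for some `i`), or no exponent is zero and for every generator `gᵘ`
(`gcd(u, r) = 1`) the exponents `bᵢ = (u * aᵢ) % r` satisfy `0 < bᵢ < r` and
`b₁ + ⋯ + bₙ > r`. -/
theorem embedsIntoProdSL_cyclic_zero_exponent_or_large_sum
    (k : Type) [Field k] [IsAlgClosed k] [CharZero k]
    {n : ℕ} {r : ℕ} (hr : 2 ≤ r) (ξ : k) (hξ : IsPrimitiveRoot ξ r)
    (a : Fin n → ℕ)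
    (hdet : r ∣ ∑ i, a i)
    (horder : Nat.gcd r (Finset.univ.gcd a) = 1)
    (n₁ n₂ : ℕ) (hn₁ : 1 ≤ n₁) (hn₂ : 1 ≤ n₂) (hn : n₁ + n₂ = n)
    (hemb : EmbedsIntoProdSL k n₁ n₂ hn
      {A | ∃ m : ℕ, A = (Matrix.diagonal fun i => ξ ^ a i) ^ m}) :
    (∃ i, r ∣ a i) ∨
      ((∀ i, ¬ r ∣ a i) ∧ ∀ u : ℕ, Nat.gcd u r = 1 →
        (∀ i, 0 < (u * a i) % r ∧ (u * a i) % r < r) ∧ r < ∑ i, (u * a i) % r) := by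
  classical
  by_cases hz : ∃ i, r ∣ a i
  · exact Or.inl hz
  push_neg at hz
  right
  refine ⟨hz, fun u hu => ?_⟩
  have hr0 : 0 < r := by omega
  set b : Fin n → ℕ := fun i => (u * a i) % r with hbdef
  have hbpos : ∀ i, 0 < b i := by
    intro i
    rcases Nat.eq_zero_or_pos (b i) with h | h
    · exfalso
      have hd : r ∣ u * a i := Nat.dvd_of_mod_eq_zero h
      have hco : Nat.Coprime r u := Nat.Coprime.symm hu
      exact hz i (hco.dvd_of_dvd_mul_left hd)
    · exact h
  have hblt : ∀ i, b i < r := fun i => Nat.mod_lt _ hr0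
  refine ⟨fun i => ⟨hbpos i, hblt i⟩, ?_⟩
  -- the embedding data applied to the generator g^u
  obtain ⟨P, hP, hbl⟩ := hemb
  obtain ⟨h₁, h₂, hd1, hd2, heq⟩ := hbl _ ⟨u, rfl⟩
  have hpowmod : ∀ m : ℕ, ξ ^ (m % r) = ξ ^ m := by
    intro m
    conv_rhs => rw [← Nat.div_add_mod m r]
    rw [pow_add, pow_mul, hξ.pow_eq_one, one_pow, one_mul]
  have hDu : (Matrix.diagonal fun i => ξ ^ a i) ^ u
      = Matrix.diagonal fun i => ξ ^ b i := by
    have hfun : (fun i => ξ ^ a i) ^ u = fun i => ξ ^ b i := by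
      funext i
      show (ξ ^ a i) ^ u = ξ ^ ((u * a i) % r)
      rw [hpowmod, ← pow_mul, mul_comm]
    rw [Matrix.diagonal_pow, hfun]
  have hconj : (Matrix.diagonal fun i => ξ ^ b i).charpoly
      = h₁.charpoly * h₂.charpoly := by
    have hcc := charpoly_conj' P ((Matrix.diagonal fun i => ξ ^ a i) ^ u) hP
    rw [heq, hDu, Matrix.charpoly_reindex, Matrix.charpoly_fromBlocks_zero₂₁] at hcc
    exact hcc.symm
  have hne : (Matrix.diagonal fun i => ξ ^ b i).charpoly ≠ 0 :=
    (Matrix.charpoly_monic _).ne_zero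
  have hroots_le : h₁.charpoly.roots ≤
      (Matrix.diagonal fun i => ξ ^ b i).charpoly.roots :=
    Polynomial.roots.le_of_dvd hne ⟨h₂.charpoly, hconj⟩
  have hrootsdiag : (Matrix.diagonal fun i => ξ ^ b i).charpoly.roots
      = Multiset.map (fun i => ξ ^ b i) Finset.univ.val := by
    have h0 := Polynomial.roots_multiset_prod_X_sub_C
      (Multiset.map (fun i => ξ ^ b i) Finset.univ.val)
    rw [Multiset.map_map] at h0
    rw [charpoly_diag', Finset.prod_eq_multiset_prod]
    convert h0 using 3
    rfl
  rw [hrootsdiag] at hroots_le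
  obtain ⟨t, ht, hteq⟩ := multiset_le_map' hroots_le
  have hcard1 : h₁.charpoly.roots.card = n₁ := by
    have hsp := (Polynomial.splits_iff_card_roots).mp
      (IsAlgClosed.splits h₁.charpoly)
    rw [hsp, Matrix.charpoly_natDegree_eq_dim, Fintype.card_fin]
  have htcard : Multiset.card t = n₁ := by
    have h1 := congrArg Multiset.card hteq
    rw [Multiset.card_map] at h1
    omega
  have hprod : (t.map fun i => ξ ^ b i).prod = 1 := by
    rw [← hteq, ← Matrix.det_eq_prod_roots_charpoly]
    exact hd1
  have hxi : ξ ^ (t.map b).sum = 1 := by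
    rw [← pow_multiset_sum', Multiset.map_map]
    convert hprod using 2
    rfl
  have hdvdt : r ∣ (t.map b).sum := hξ.dvd_of_pow_eq_one _ hxi
  -- positivity of sums over nonempty sub-multisets
  have hpos_part : ∀ m : Multiset (Fin n), m ≠ 0 → 0 < (m.map b).sum := by
    intro m hm
    obtain ⟨i, hi⟩ := Multiset.exists_mem_of_ne_zero hm
    exact lt_of_lt_of_le (hbpos i)
      (Multiset.single_le_sum (fun x _ => Nat.zero_le x) _ (Multiset.mem_map_of_mem b hi))
  have htne : t ≠ 0 := by
    intro h0
    rw [h0] at htcard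
    simp at htcard
    omega
  have hrle : r ≤ (t.map b).sum := Nat.le_of_dvd (hpos_part t htne) hdvdt
  have hcardu : Multiset.card (Finset.univ.val : Multiset (Fin n)) = n := by
    simp
  have hrestne : (Finset.univ.val : Multiset (Fin n)) - t ≠ 0 := by
    intro h0
    have := Multiset.card_sub ht
    rw [h0] at this
    simp only [Multiset.card_zero] at this
    rw [hcardu, htcard] at this
    omega
  have hrestpos := hpos_part _ hrestne
  have hsplit : ∑ i, b i = ((Finset.univ.val - t).map b).sum + (t.map b).sum := by
    conv_lhs => rw [Finset.sum_eq_multiset_sum, ← tsub_add_cancel_of_le ht]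
    rw [Multiset.map_add, Multiset.sum_add]
  have hsplit2 : Finset.univ.sum b
      = ((Finset.univ.val - t).map b).sum + (t.map b).sum := hsplit
  omega
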